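/- Let $p$ be a prime, $L \ge 2$, $r \ge 2(L-1)$. Every element of $\mathrm{SL}_d(\mathbb{Z}/p^r\mathbb{Z})$ congruent to $I$ modulo $p^{4(L-1)}$ can be written as $U_1 L_1 U_2 L_2$ where $U_1, U_2$ are upper unitriangular, $L_1, L_2$ are lower unitriangular, and all strictly off-diagonal entries of $U_1, U_2, L_1, L_2$ are divisible by $p^{2(L-1)}$, in the case $d = 2$. -/

import Mathlib

open Matrix

private lemma sl2_ULUL_helper {R : Type*} [CommRing R] (a b c d x y z w : R)
    (hdet : a * d - b * c = 1) (hd : IsUnit d) (hyz : 1 + y * z = d)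
    (hw : d * w = c - y) (hx : d * x = b - z) :
    !![a, b; c, d] = !![1, x; 0, 1] * !![1, 0; y, 1] * !![1, z; 0, 1] * !![1, 0; w, 1] := by
  ext i j
  fin_cases i <;> fin_cases j <;>
    simp [Matrix.mul_apply, Fin.sum_univ_two]
  · apply hd.mul_left_cancel
    linear_combination hdet + (-y - d * w) * hx + (d * x - x - x * y * z - b) * hw +
      (1 - c * x + x * y) * hyz
  · linear_combination -hx - x * hyz
  · linear_combination -hw - w * hyz
  · linear_combination -hyz

/-- case `d = 2`: every element of `SL₂(ℤ/p^rℤ)` congruent to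
`I` mod `p^{4(L-1)}` is `U₁ L₁ U₂ L₂` with `U₁, U₂` upper unitriangular,
`L₁, L₂` lower unitriangular, all off-diagonal entries divisible by `p^{2(L-1)}`. -/
theorem sl2_ULUL_decomposition (p r L : ℕ) (hp : p.Prime) (hL : 2 ≤ L)
    (hr : 2 * (L - 1) ≤ r)
    (A : Matrix.SpecialLinearGroup (Fin 2) (ZMod (p ^ r)))
    (hA : ∀ i j, (p : ZMod (p ^ r)) ^ (4 * (L - 1)) ∣
      ((A : Matrix (Fin 2) (Fin 2) (ZMod (p ^ r))) i j
        - (1 : Matrix (Fin 2) (Fin 2) (ZMod (p ^ r))) i j)) :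
    ∃ x y z w : ZMod (p ^ r),
      (p : ZMod (p ^ r)) ^ (2 * (L - 1)) ∣ x ∧
      (p : ZMod (p ^ r)) ^ (2 * (L - 1)) ∣ y ∧
      (p : ZMod (p ^ r)) ^ (2 * (L - 1)) ∣ z ∧
      (p : ZMod (p ^ r)) ^ (2 * (L - 1)) ∣ w ∧
      (A : Matrix (Fin 2) (Fin 2) (ZMod (p ^ r)))
        = !![1, x; 0, 1] * !![1, 0; y, 1] * !![1, z; 0, 1] * !![1, 0; w, 1] := by
  set R := ZMod (p ^ r)
  set B := (A : Matrix (Fin 2) (Fin 2) R) with hB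
  set a := B 0 0
  set b := B 0 1
  set c := B 1 0
  set d := B 1 1
  have hdet : a * d - b * c = 1 := by
    have h2 := A.2
    rw [Matrix.det_fin_two] at h2
    exact h2
  have hd1 : (p : R) ^ (4 * (L - 1)) ∣ d - 1 := by simpa using hA 1 1
  have hb : (p : R) ^ (4 * (L - 1)) ∣ b := by simpa using hA 0 1
  have hc : (p : R) ^ (4 * (L - 1)) ∣ c := by simpa using hA 1 0
  obtain ⟨s, hs⟩ := hd1
  have hnp : IsNilpotent (p : R) := ⟨r, by rw [← Nat.cast_pow, ZMod.natCast_self]⟩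
  have hnil : IsNilpotent ((p : R) ^ (4 * (L - 1)) * s) :=
    (Commute.all _ s).isNilpotent_mul_right (hnp.pow_of_pos (by omega))
  have hud : IsUnit d := by
    have hdeq : d = 1 + (p : R) ^ (4 * (L - 1)) * s := by linear_combination hs
    rw [hdeq]
    exact hnil.isUnit_one_add
  obtain ⟨u, hu⟩ := hud
  have hdd : ∀ t : R, d * ((↑u⁻¹ : R) * t) = t := by
    intro t
    rw [← hu, ← mul_assoc, Units.mul_inv, one_mul]
  have hpm : (p : R) ^ (2 * (L - 1)) ∣ (p : R) ^ (4 * (L - 1)) :=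
    pow_dvd_pow _ (by omega)
  refine ⟨(↑u⁻¹ : R) * (b - (p : R) ^ (2 * (L - 1)) * s), (p : R) ^ (2 * (L - 1)),
    (p : R) ^ (2 * (L - 1)) * s, (↑u⁻¹ : R) * (c - (p : R) ^ (2 * (L - 1))),
    ?_, dvd_refl _, dvd_mul_right _ _, ?_, ?_⟩
  · exact Dvd.dvd.mul_left (dvd_sub (hpm.trans hb) (dvd_mul_right _ _)) _
  · exact Dvd.dvd.mul_left (dvd_sub (hpm.trans hc) (dvd_refl _)) _
  · have hyz : 1 + (p : R) ^ (2 * (L - 1)) * ((p : R) ^ (2 * (L - 1)) * s) = d := by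
      have : (p : R) ^ (2 * (L - 1)) * ((p : R) ^ (2 * (L - 1)) * s)
          = (p : R) ^ (4 * (L - 1)) * s := by
        rw [← mul_assoc, ← pow_add]
        congr 2
        omega
      rw [this]
      linear_combination -hs
    have hBeq : B = !![a, b; c, d] := by
      rw [← Matrix.eta_fin_two B]
    rw [hBeq]
    exact sl2_ULUL_helper a b c d _ _ _ _ hdet ⟨u, hu⟩ hyz (hdd _) (hdd _)
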